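/- The real number ∑_{n=1}^∞ f(n) 2^{-n} is irrational for every completely multiplicative function f : ℕ → {-1,1} with f(p) = -1 for some prime p. -/

import Mathlib

theorem stmt_17 (f : ℕ → ℤ) (hf1 : f 1 = 1)
    (hmul : ∀ m n, 1 ≤ m → 1 ≤ n → f (m * n) = f m * f n)
    (hval : ∀ n, 1 ≤ n → f n = -1 ∨ f n = 1)
    (p : ℕ) (hp : p.Prime) (hfp : f p = -1) :
    Irrational (∑' n : ℕ, (f (n + 1) : ℝ) / 2 ^ (n + 1)) := by
  -- f is not eventually constant
  have not_const : ∀ (N : ℕ) (c : ℤ), (∀ i, N ≤ i → f i = c) → False := by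
    intro N c hc
    set m := N + 1 with hm
    have hm1 : 1 ≤ m := by omega
    have hNm : N ≤ m * m := by nlinarith
    have hsq : f (m * m) = 1 := by
      rcases hval m hm1 with h | h <;> rw [hmul m m hm1 hm1, h] <;> ring
    have hNpm : N ≤ p * (m * m) := le_trans hNm (Nat.le_mul_of_pos_left _ hp.pos)
    have hneg : f (p * (m * m)) = -1 := by
      rw [hmul p (m * m) hp.one_lt.le (by nlinarith), hfp, hsq]; ring
    have h1 := hc _ hNm
    have h2 := hc _ hNpm
    omega
  set a : ℕ → ℝ := fun n => (f (n + 1) : ℝ) with ha_def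
  have ha : ∀ n, a n = 1 ∨ a n = -1 := by
    intro n
    rcases hval (n + 1) (by omega) with h | h
    · right; simp [ha_def, h]
    · left; simp [ha_def, h]
  have hgeo : Summable (fun n : ℕ => (1 / 2 : ℝ) ^ (n + 1)) :=
    ((summable_geometric_of_lt_one (by norm_num) (by norm_num : (1/2:ℝ) < 1)).mul_right
      (1/2)).congr fun n => (pow_succ (1/2:ℝ) n).symm
  have hkey : ∀ n : ℕ, (1 / 2 : ℝ) ^ (n + 1) = 1 / 2 ^ (n + 1) := by
    intro n; rw [div_pow, one_pow]
  have hnorm : ∀ k n : ℕ, ‖a (k + n) / 2 ^ (n + 1)‖ = (1 / 2 : ℝ) ^ (n + 1) := by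
    intro k n
    rcases ha (k + n) with h | h <;>
      rw [h, hkey] <;> simp [abs_div, abs_of_nonneg] <;> positivity
  have hsum : ∀ k, Summable (fun n : ℕ => a (k + n) / 2 ^ (n + 1)) := by
    intro k
    exact Summable.of_norm_bounded hgeo fun n => le_of_eq (hnorm k n)
  set T : ℕ → ℝ := fun k => ∑' n, a (k + n) / 2 ^ (n + 1) with hT_def
  have htsum_geo : ∑' n : ℕ, (1 / 2 : ℝ) ^ (n + 1) = 1 := by
    have h2 : ∑' n : ℕ, (1 / 2 : ℝ) ^ n = 2 := by
      rw [tsum_geometric_of_lt_one (by norm_num) (by norm_num)]; norm_num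
    calc ∑' n : ℕ, (1 / 2 : ℝ) ^ (n + 1) = (∑' n : ℕ, (1 / 2 : ℝ) ^ n) * (1 / 2) := by
          simp_rw [pow_succ]; exact tsum_mul_right
      _ = 1 := by rw [h2]; norm_num
  have hTbd : ∀ k, |T k| ≤ 1 := by
    intro k
    calc |T k| ≤ ∑' n, ‖a (k + n) / 2 ^ (n + 1)‖ :=
          norm_tsum_le_tsum_norm (hgeo.congr fun n => (hnorm k n).symm)
      _ = ∑' n : ℕ, (1 / 2 : ℝ) ^ (n + 1) := tsum_congr fun n => hnorm k n
      _ = 1 := htsum_geo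
  have hTrec : ∀ k, T (k + 1) = 2 * T k - a k := by
    intro k
    have h0 : T k = a (k + 0) / 2 ^ (0 + 1) + ∑' n, a (k + (n + 1)) / 2 ^ (n + 1 + 1) :=
      (hsum k).tsum_eq_zero_add
    have h1 : (fun n : ℕ => a (k + (n + 1)) / 2 ^ (n + 1 + 1)) =
        fun n : ℕ => (a ((k + 1) + n) / 2 ^ (n + 1)) * (1 / 2) := by
      funext n
      rw [show k + (n + 1) = (k + 1) + n by omega, pow_succ]
      ring
    rw [h1, tsum_mul_right] at h0
    have : T k = a k / 2 + T (k + 1) * (1 / 2) := by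
      simpa using h0
    linarith
  have hTone : ∀ k, T k = 1 → ∀ n, a (k + n) = 1 := by
    intro k h1 n
    have hs : Summable (fun n : ℕ => (1 / 2 : ℝ) ^ (n + 1) - a (k + n) / 2 ^ (n + 1)) :=
      hgeo.sub (hsum k)
    have hzero : ∑' n : ℕ, ((1 / 2 : ℝ) ^ (n + 1) - a (k + n) / 2 ^ (n + 1)) = 0 := by
      rw [hgeo.tsum_sub (hsum k), htsum_geo]
      rw [show ∑' n, a (k + n) / 2 ^ (n + 1) = T k from rfl, h1]; ring
    have hnn : ∀ j : ℕ, 0 ≤ (1 / 2 : ℝ) ^ (j + 1) - a (k + j) / 2 ^ (j + 1) := by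
      intro j
      rcases ha (k + j) with h | h <;> rw [h, hkey] <;>
        [simp; (rw [neg_div, sub_neg_eq_add]; positivity)]
    have hle : (1 / 2 : ℝ) ^ (n + 1) - a (k + n) / 2 ^ (n + 1) ≤ 0 := by
      rw [← hzero]
      exact hs.le_tsum n fun j _ => hnn j
    have heq : (1 / 2 : ℝ) ^ (n + 1) - a (k + n) / 2 ^ (n + 1) = 0 :=
      le_antisymm hle (hnn n)
    rw [hkey, div_sub_div_same] at heq
    rcases div_eq_zero_iff.mp heq with h | h
    · linarith
    · exact absurd h (by positivity)
  have hTnegone : ∀ k, T k = -1 → ∀ n, a (k + n) = -1 := by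
    intro k h1 n
    have hs : Summable (fun n : ℕ => (1 / 2 : ℝ) ^ (n + 1) + a (k + n) / 2 ^ (n + 1)) :=
      hgeo.add (hsum k)
    have hzero : ∑' n : ℕ, ((1 / 2 : ℝ) ^ (n + 1) + a (k + n) / 2 ^ (n + 1)) = 0 := by
      rw [hgeo.tsum_add (hsum k), htsum_geo]
      rw [show ∑' n, a (k + n) / 2 ^ (n + 1) = T k from rfl, h1]; ring
    have hnn : ∀ j : ℕ, 0 ≤ (1 / 2 : ℝ) ^ (j + 1) + a (k + j) / 2 ^ (j + 1) := by
      intro j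
      rcases ha (k + j) with h | h <;> rw [h, hkey] <;>
        [positivity; (rw [neg_div, add_neg_cancel])]
    have hle : (1 / 2 : ℝ) ^ (n + 1) + a (k + n) / 2 ^ (n + 1) ≤ 0 := by
      rw [← hzero]
      exact hs.le_tsum n fun j _ => hnn j
    have heq : (1 / 2 : ℝ) ^ (n + 1) + a (k + n) / 2 ^ (n + 1) = 0 :=
      le_antisymm hle (hnn n)
    rw [hkey, ← add_div] at heq
    rcases div_eq_zero_iff.mp heq with h | h
    · linarith
    · exact absurd h (by positivity)
  -- now suppose rational
  intro hrat
  obtain ⟨r, hr⟩ := hrat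
  have hT0 : T 0 = ∑' n : ℕ, (f (n + 1) : ℝ) / 2 ^ (n + 1) :=
    tsum_congr fun n => by rw [zero_add]
  set d : ℝ := (r.den : ℝ) with hd_def
  have hdpos : (0:ℝ) < d := by
    simp only [hd_def]; exact_mod_cast r.pos
  -- d * T k is always an integer
  have hint : ∀ k, ∃ z : ℤ, (z : ℝ) = d * T k := by
    intro k
    induction k with
    | zero =>
      refine ⟨r.num, ?_⟩
      have h2 : ((r * (r.den : ℚ) : ℚ) : ℝ) = ((r.num : ℚ) : ℝ) := by
        rw [Rat.mul_den_eq_num]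
      push_cast at h2
      rw [hT0, ← hr, hd_def]
      linear_combination -h2
    | succ k ih =>
      obtain ⟨z, hz⟩ := ih
      refine ⟨2 * z - r.den * f (k + 1), ?_⟩
      rw [hTrec k]
      push_cast
      rw [hz]
      simp only [ha_def, hd_def]
      push_cast
      ring
  choose g hg using hint
  have hgbd : ∀ k, g k ∈ Finset.Icc (-(r.den : ℤ)) (r.den : ℤ) := by
    intro k
    have h1 : |(g k : ℝ)| ≤ d := by
      rw [hg k, abs_mul, abs_of_pos hdpos]
      calc d * |T k| ≤ d * 1 := by
            exact mul_le_mul_of_nonneg_left (hTbd k) hdpos.le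
        _ = d := mul_one d
    rw [Finset.mem_Icc]
    rw [hd_def] at h1
    have : |(g k : ℤ)| ≤ (r.den : ℤ) := by exact_mod_cast h1
    constructor <;> [linarith [neg_abs_le (g k)]; linarith [le_abs_self (g k)]]
  -- pigeonhole
  obtain ⟨m0, n0, hmn0, heq0⟩ := Finite.exists_ne_map_eq_of_infinite
    (fun k : ℕ => (⟨g k, hgbd k⟩ : (Finset.Icc (-(r.den : ℤ)) (r.den : ℤ))))
  have hTeq0 : T m0 = T n0 := by
    have hgeq : g m0 = g n0 := by simpa using heq0
    have := (hg m0).symm.trans ((congrArg (fun z : ℤ => (z:ℝ)) hgeq).trans (hg n0))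
    exact mul_left_cancel₀ (ne_of_gt hdpos) this
  -- case split on whether some tail is zero
  by_cases hz : ∀ k, T k ≠ 0
  · -- deterministic dynamics
    have hsign : ∀ k, (0 < T k → a k = 1) ∧ (T k < 0 → a k = -1) := by
      intro k
      have hrec := hTrec k
      have hbd := hTbd (k + 1)
      rw [abs_le] at hbd
      rcases ha k with h | h
      · refine ⟨fun _ => h, fun hlt => ?_⟩
        exfalso; rw [h] at hrec; linarith
      · refine ⟨fun hgt => ?_, fun _ => h⟩
        exfalso; rw [h] at hrec; linarith
    have hstep : ∀ m n, T m = T n → a m = a n ∧ T (m + 1) = T (n + 1) := by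
      intro m n h
      have ham : a m = a n := by
        rcases lt_or_gt_of_ne (hz m) with hlt | hgt
        · rw [(hsign m).2 hlt, (hsign n).2 (h ▸ hlt)]
        · rw [(hsign m).1 hgt, (hsign n).1 (h ▸ hgt)]
      exact ⟨ham, by rw [hTrec, hTrec, h, ham]⟩
    -- wlog through a general lemma
    have key : ∀ m n : ℕ, m < n → T m = T n → False := by
      intro m n hmn hTeq
      have hshift : ∀ j, T (m + j) = T (n + j) ∧ a (m + j) = a (n + j) := by
        intro j
        induction j with
        | zero => exact ⟨by simpa using hTeq, (hstep m n hTeq).1⟩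
        | succ j ih =>
          have h1 := (hstep _ _ ih.1).2
          rw [show m + j + 1 = m + (j + 1) by omega, show n + j + 1 = n + (j + 1) by omega] at h1
          exact ⟨h1, (hstep _ _ h1).1⟩
      set q := n - m with hq_def
      have hq1 : 1 ≤ q := by omega
      have hper : ∀ i, m + 1 ≤ i → f (i + q) = f i := by
        intro i hi
        have h := (hshift (i - m - 1)).2
        simp only [ha_def] at h
        have hia : m + (i - m - 1) + 1 = i := by omega
        have hib : n + (i - m - 1) + 1 = i + q := by omega
        rw [hia, hib] at h
        exact_mod_cast h.symm
      have hfq : f q ≠ 0 := by rcases hval q hq1 with h | h <;> omega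
      have hconst : ∀ i, m + 1 ≤ i → f (i + 1) = f i := by
        intro i hi
        have hqi : m + 1 ≤ q * i := le_trans hi (Nat.le_mul_of_pos_left _ (by omega))
        have h1 : f (q * i + q) = f (q * i) := hper (q * i) hqi
        rw [show q * i + q = q * (i + 1) by ring] at h1
        rw [hmul q (i + 1) hq1 (by omega), hmul q i hq1 (by omega)] at h1
        exact mul_left_cancel₀ hfq h1
      have hall : ∀ i, m + 1 ≤ i → f i = f (m + 1) := by
        intro i hi
        induction i with
        | zero => omega
        | succ i ih =>
          rcases Nat.lt_or_ge (m + 1) (i + 1) with h | h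
          · have hi' : m + 1 ≤ i := by omega
            rw [hconst i hi', ih hi']
          · have : i + 1 = m + 1 := by omega
            rw [this]
      exact not_const (m + 1) (f (m + 1)) hall
    rcases (Ne.lt_or_gt hmn0) with h | h
    · exact key m0 n0 h hTeq0
    · exact key n0 m0 h hTeq0.symm
  · push_neg at hz
    obtain ⟨k, hk⟩ := hz
    have h1 : T (k + 1) = -a k := by rw [hTrec, hk]; ring
    rcases ha k with h | h
    · -- T (k+1) = -1, so a j = -1 for j ≥ k+1, so f i = -1 for i ≥ k+2
      have h2 : T (k + 1) = -1 := by rw [h1, h]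
      refine not_const (k + 2) (-1) fun i hi => ?_
      have h3 := hTnegone (k + 1) h2 (i - k - 2)
      rw [show k + 1 + (i - k - 2) = i - 1 by omega] at h3
      simp only [ha_def] at h3
      rw [show i - 1 + 1 = i by omega] at h3
      exact_mod_cast h3
    · have h2 : T (k + 1) = 1 := by rw [h1, h]; ring
      refine not_const (k + 2) 1 fun i hi => ?_
      have h3 := hTone (k + 1) h2 (i - k - 2)
      rw [show k + 1 + (i - k - 2) = i - 1 by omega] at h3
      simp only [ha_def] at h3
      rw [show i - 1 + 1 = i by omega] at h3
      exact_mod_cast h3
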